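/- There exist a constant c > 0 and an integer N such that for all integers n ≥ N and all even integers m ≥ N, the zero-error randomized query complexity satisfies R0(g_{n,m}) ≥ c·n·m. -/

import Mathlib

open Classical
open scoped ENNReal

set_option maxHeartbeats 1000000

/-! ### Deterministic decision trees -/

inductive DTree (ι σ : Type) : Type
  | leaf (b : Bool) : DTree ι σ
  | node (v : ι) (child : σ → DTree ι σ) : DTree ι σ

namespace DTree

variable {ι σ : Type}

/-- The output of the decision tree on input `x`. -/
def eval (x : ι → σ) : DTree ι σ → Bool
  | leaf b => b
  | node v child => (child (x v)).eval x

/-- The list of variables queried by the decision tree on input `x`,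
in the order they are queried. -/
def queryList (x : ι → σ) : DTree ι σ → List ι
  | leaf _ => []
  | node v child => v :: (child (x v)).queryList x

/-- The cost of the decision tree on input `x`: the number of internal nodes visited. -/
def cost (T : DTree ι σ) (x : ι → σ) : ℕ := (T.queryList x).length

/-- `T` computes `f` if it outputs `f x` on every input `x`. -/
def Computes (T : DTree ι σ) (f : (ι → σ) → Bool) : Prop := ∀ x, T.eval x = f x

end DTree

/-- Deterministic query complexity. -/
noncomputable def detComplexity {ι σ : Type} (f : (ι → σ) → Bool) : ℕ :=
  sInf {d : ℕ | ∃ T : DTree ι σ, T.Computes f ∧ ∀ x, T.cost x ≤ d}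

/-- Expected cost of a randomized decision tree (a distribution over deterministic
decision trees) on input `x`. -/
noncomputable def expCost {ι σ : Type} (μ : PMF (DTree ι σ)) (x : ι → σ) : ℝ≥0∞ :=
  ∑' T : DTree ι σ, μ T * (T.cost x : ℝ≥0∞)

/-- Zero-error (Las Vegas) randomized query complexity. -/
noncomputable def R0query {ι σ : Type} (f : (ι → σ) → Bool) : ℝ≥0∞ :=
  ⨅ μ ∈ {μ : PMF (DTree ι σ) | ∀ T ∈ μ.support, T.Computes f},
    ⨆ x : ι → σ, expCost μ x

/-- One-sided error randomized query complexity. -/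
noncomputable def R1query {ι σ : Type} (f : (ι → σ) → Bool) : ℝ≥0∞ :=
  ⨅ μ ∈ {μ : PMF (DTree ι σ) |
      (∀ x, f x = false → ∀ T ∈ μ.support, T.eval x = false) ∧
      (∀ x, f x = true → 1 / 2 ≤ ∑' T : DTree ι σ, if T.eval x = true then μ T else 0)},
    ⨆ x : ι → σ, expCost μ x

/-- Bounded-error (Monte Carlo) randomized query complexity. -/
noncomputable def Rquery {ι σ : Type} (f : (ι → σ) → Bool) : ℝ≥0∞ :=
  ⨅ μ ∈ {μ : PMF (DTree ι σ) |
      ∀ x, 9 / 10 ≤ ∑' T : DTree ι σ, if T.eval x = f x then μ T else 0},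
    ⨆ x : ι → σ, expCost μ x
/-! ### Quantum query algorithms -/

/-- The standard quantum query oracle `O_x |j,p⟩|w⟩ = |j, p + x_j mod S⟩|w⟩`,
as a matrix. -/
noncomputable def qOracle {V ω : Type} [DecidableEq V] [DecidableEq ω] {S : ℕ}
    (x : V → Fin S) : Matrix (V × Fin S × ω) (V × Fin S × ω) ℂ :=
  fun r c => if r = (c.1, c.2.1 + x c.1, c.2.2) then 1 else 0

/-- A quantum query algorithm on inputs `x : V → Fin S`, making `queries` queries, with
workspace `Fin (W+1)`, alternating the unitaries `U 0, …, U queries` with the oracle,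
and measuring with the projector `P` at the end. -/
structure QAlg (V : Type) [Fintype V] [DecidableEq V] (S : ℕ) [NeZero S] where
  queries : ℕ
  W : ℕ
  init : V
  U : ℕ → Matrix (V × Fin S × Fin (W + 1)) (V × Fin S × Fin (W + 1)) ℂ
  hU : ∀ t, (U t).conjTranspose * U t = 1 ∧ U t * (U t).conjTranspose = 1
  P : Matrix (V × Fin S × Fin (W + 1)) (V × Fin S × Fin (W + 1)) ℂ
  hP : P.conjTranspose = P ∧ P * P = P

namespace QAlg

variable {V : Type} [Fintype V] [DecidableEq V] {S : ℕ} [NeZero S]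

/-- The state of the quantum algorithm after `t` steps on input `x`. -/
noncomputable def state (A : QAlg V S) (x : V → Fin S) :
    ℕ → (V × Fin S × Fin (A.W + 1) → ℂ)
  | 0 => (A.U 0).mulVec fun r => if r = (A.init, 0, 0) then 1 else 0
  | t + 1 => (A.U (t + 1)).mulVec ((qOracle x).mulVec (A.state x t))

/-- The probability that the algorithm accepts input `x`: `‖P |Ψ_x⟩‖²`. -/
noncomputable def acceptProb (A : QAlg V S) (x : V → Fin S) : ℝ :=
  ∑ r : V × Fin S × Fin (A.W + 1), Complex.normSq (A.P.mulVec (A.state x A.queries) r)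

end QAlg

/-- Bounded-error quantum query complexity (for functions over a finite input
alphabet `σ`, identified with `Fin (card σ)` via a fixed bijection). -/
noncomputable def Qquery {V σ : Type} [Fintype V] [DecidableEq V] [Fintype σ] [Nonempty σ]
    (f : (V → σ) → Bool) : ℕ :=
  letI : NeZero (Fintype.card σ) := ⟨Fintype.card_ne_zero⟩
  sInf {t : ℕ | ∃ A : QAlg V (Fintype.card σ), A.queries = t ∧
    ∀ x : V → σ,
      (f x = true → 9 / 10 ≤ A.acceptProb fun j => Fintype.equivFin σ (x j)) ∧
      (f x = false → A.acceptProb (fun j => Fintype.equivFin σ (x j)) ≤ 1 / 10)}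

/-- Exact quantum query complexity. -/
noncomputable def QEquery {V σ : Type} [Fintype V] [DecidableEq V] [Fintype σ] [Nonempty σ]
    (f : (V → σ) → Bool) : ℕ :=
  letI : NeZero (Fintype.card σ) := ⟨Fintype.card_ne_zero⟩
  sInf {t : ℕ | ∃ A : QAlg V (Fintype.card σ), A.queries = t ∧
    ∀ x : V → σ,
      (f x = true → A.acceptProb (fun j => Fintype.equivFin σ (x j)) = 1) ∧
      (f x = false → A.acceptProb (fun j => Fintype.equivFin σ (x j)) = 0)}

/-- Approximate degree of a boolean function. -/
noncomputable def adeg {ι : Type} (F : (ι → Bool) → Bool) : ℕ :=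
  sInf {d : ℕ | ∃ p : MvPolynomial ι ℝ, p.totalDegree ≤ d ∧
    ∀ y : ι → Bool, |MvPolynomial.eval (fun i => if y i then (1 : ℝ) else 0) p -
      (if F y then 1 else 0)| ≤ 1 / 10}
/-! ### The pointer functions of Göös–Pitassi–Watson type -/

/-- A symbol of the input alphabet: a boolean value, a left pointer, a right pointer,
and a back/internal pointer (to a cell or a column, depending on `β`). -/
structure PSym (n m : ℕ) (β : Type) where
  val : Bool
  lp : Option (Fin n × Fin m)
  rp : Option (Fin n × Fin m)
  bp : Option β
deriving DecidableEq

/-- The all-ones symbol `(1,⊥,⊥,⊥)`. -/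
def PSym.one (n m : ℕ) (β : Type) : PSym n m β := ⟨true, none, none, none⟩

/-- The symbol `(0,⊥,⊥,⊥)`. -/
def PSym.zero (n m : ℕ) (β : Type) : PSym n m β := ⟨false, none, none, none⟩

def PSym.equivProd (n m : ℕ) (β : Type) :
    PSym n m β ≃ Bool × Option (Fin n × Fin m) × Option (Fin n × Fin m) × Option β where
  toFun v := (v.val, v.lp, v.rp, v.bp)
  invFun p := ⟨p.1, p.2.1, p.2.2.1, p.2.2.2⟩
  left_inv _ := rfl
  right_inv _ := rfl

instance {n m : ℕ} {β : Type} [Fintype β] : Fintype (PSym n m β) :=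
  Fintype.ofEquiv _ (PSym.equivProd n m β).symm

instance {n m : ℕ} {β : Type} : Nonempty (PSym n m β) := ⟨PSym.one n m β⟩

/-- The sequence of k bits of `j`, most significant first:  the root-to-leaf path
(`false` = left, `true` = right) of the `j`-th leaf in the complete binary tree of depth `k`. -/
def bitsPath (k j : ℕ) : List Bool :=
  ((List.range k).reverse).map fun i => j.testBit i

/-- The root-to-leaf path of the leaf labeled `j` (0-indexed) in the balanced binary tree
with `m` leaves: the complete binary tree if `m` is a power of 2, and otherwise the complete
binary tree on `2 ^ ⌊log₂ m⌋` leaves with a pair of children added to each of the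
`m - 2 ^ ⌊log₂ m⌋` leftmost leaves. -/
def treePath (m j : ℕ) : List Bool :=
  if m - 2 ^ Nat.log 2 m = 0 then bitsPath (Nat.log 2 m) j
  else if j < 2 * (m - 2 ^ Nat.log 2 m) then
    bitsPath (Nat.log 2 m) (j / 2) ++ [j % 2 == 1]
  else bitsPath (Nat.log 2 m) (j - (m - 2 ^ Nat.log 2 m))

/-- Starting at cell `a` and following the left/right pointers of `x` as prescribed by the
list `p` of moves (`false` = left pointer, `true` = right pointer); returns `none` if a
null pointer is encountered. -/
def followPath {n m : ℕ} {β : Type} (x : Fin n × Fin m → PSym n m β)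
    (a : Fin n × Fin m) (p : List Bool) : Option (Fin n × Fin m) :=
  p.foldl (fun acc b => acc.bind fun c => if b then (x c).rp else (x c).lp) (some a)

/-- The conditions for `x` to be a 1-input of `f_{n,m}`, with marked column `b` and special
element `a`: (1) `b` is the unique all-1 column; (2) `a` is the unique cell of column `b`
with `x_a ≠ (1,⊥,⊥,⊥)`; (3) for every column `j ≠ b` the tree path from `a` to the leaf
labeled `j` exists, and ends at a cell `ℓ_j` of column `j` holding a 0; (4) the back pointer
of each `ℓ_j` points to the column `b`. -/
def fCond (n m : ℕ) (x : Fin n × Fin m → PSym n m (Fin m))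
    (b : Fin m) (a : Fin n × Fin m) : Prop :=
  (∀ j : Fin m, (∀ i : Fin n, (x (i, j)).val = true) ↔ j = b) ∧
  a.2 = b ∧
  (∀ i : Fin n, x (i, b) ≠ PSym.one n m (Fin m) ↔ (i, b) = a) ∧
  ∀ j : Fin m, j ≠ b →
    ∃ ℓ : Fin n × Fin m, followPath x a (treePath m j.1) = some ℓ ∧
      ℓ.2 = j ∧ (x ℓ).val = false ∧ (x ℓ).bp = some b

/-- The pointer function `f_{n,m}`, with back pointers to the marked column. -/
noncomputable def fFun (n m : ℕ) (x : Fin n × Fin m → PSym n m (Fin m)) : Bool :=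
  if ∃ b a, fCond n m x b a then true else false

/-- The conditions for `x` to be a 1-input of `g_{n,m}`, with marked column `b` and special
element `a`: (1)–(3) as for `f_{n,m}`, and (4′) the set of columns `j ≠ b` whose highlighted
zero `ℓ_j` has back pointer to `a` has size exactly `m/2`. -/
def gCond (n m : ℕ) (x : Fin n × Fin m → PSym n m (Fin n × Fin m))
    (b : Fin m) (a : Fin n × Fin m) : Prop :=
  (∀ j : Fin m, (∀ i : Fin n, (x (i, j)).val = true) ↔ j = b) ∧
  a.2 = b ∧
  (∀ i : Fin n, x (i, b) ≠ PSym.one n m (Fin n × Fin m) ↔ (i, b) = a) ∧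
  (∀ j : Fin m, j ≠ b →
    ∃ ℓ : Fin n × Fin m, followPath x a (treePath m j.1) = some ℓ ∧
      ℓ.2 = j ∧ (x ℓ).val = false) ∧
  {j : Fin m | j ≠ b ∧ ∃ ℓ : Fin n × Fin m,
      followPath x a (treePath m j.1) = some ℓ ∧ (x ℓ).bp = some a}.ncard = m / 2

/-- The pointer function `g_{n,m}`, where exactly `m/2` of the highlighted zeroes point
back to the special element. -/
noncomputable def gFun (n m : ℕ) (x : Fin n × Fin m → PSym n m (Fin n × Fin m)) : Bool :=
  if ∃ b a, gCond n m x b a then true else false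

/-- Column `j` is good in `x` (for `g_{n,m}`): `x` is a 1-input with marked column `b ≠ j`
and special element `a`, and the highlighted zero of column `j` points back to `a`. -/
def goodColumn (n m : ℕ) (x : Fin n × Fin m → PSym n m (Fin n × Fin m)) (j : Fin m) : Prop :=
  ∃ b a, gCond n m x b a ∧ j ≠ b ∧
    ∃ ℓ : Fin n × Fin m, followPath x a (treePath m j.1) = some ℓ ∧ (x ℓ).bp = some a

/-- The conditions for `x` to be a 1-input of `h_{k,n,m}`, with marked columns `b 0,…,b (k-1)`
and special elements `a 0,…,a (k-1)`: (1) the `b s` are exactly the all-1 columns; (2) `a s` is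
the unique cell of column `b s` with `x_{a s} ≠ (1,⊥,⊥,⊥)`; (3) the internal pointers of the
`a s` form a cycle and all the `a s` have equal left pointers and equal right pointers;
(4) for every non-marked column `j` the tree path from any `a s` to the leaf labeled `j`
exists and ends at a cell `ℓ_j` of column `j` holding a 0. -/
def hCond (k n m : ℕ) (x : Fin n × Fin m → PSym n m (Fin n × Fin m))
    (b : Fin k → Fin m) (a : Fin k → Fin n × Fin m) : Prop :=
  Function.Injective b ∧
  (∀ j : Fin m, (∀ i : Fin n, (x (i, j)).val = true) ↔ ∃ s, b s = j) ∧
  (∀ s, (a s).2 = b s) ∧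
  (∀ s, ∀ i : Fin n, x (i, b s) ≠ PSym.one n m (Fin n × Fin m) ↔ (i, b s) = a s) ∧
  (∀ s : Fin k, (x (a s)).bp = some (a ⟨(s.1 + 1) % k, Nat.mod_lt _ s.pos⟩)) ∧
  (∀ s t : Fin k, (x (a s)).lp = (x (a t)).lp ∧ (x (a s)).rp = (x (a t)).rp) ∧
  ∀ j : Fin m, (∀ s, b s ≠ j) → ∀ s : Fin k,
    ∃ ℓ : Fin n × Fin m, followPath x (a s) (treePath m j.1) = some ℓ ∧
      ℓ.2 = j ∧ (x ℓ).val = false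

/-- The pointer function `h_{k,n,m}` with `k` marked columns and no back pointers. -/
noncomputable def hFun (k n m : ℕ) (x : Fin n × Fin m → PSym n m (Fin n × Fin m)) : Bool :=
  if ∃ b a, hCond k n m x b a then true else false

/-- The hard input `x^ℓ`: cell `(i,j)` holds `(0,⊥,⊥,⊥)` if `i = ℓ j` and `(1,⊥,⊥,⊥)`
otherwise. -/
def xhard (n m : ℕ) (β : Type) (ℓ : Fin m → Fin n) : Fin n × Fin m → PSym n m β :=
  fun c => if c.1 = ℓ c.2 then PSym.zero n m β else PSym.one n m β

/-- The set of (distinct) cells queried among the first `t` queries of `T` on input `x`. -/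
def queriedUpTo {ι σ : Type} [DecidableEq ι] (T : DTree ι σ) (x : ι → σ) (t : ℕ) :
    Finset ι :=
  ((T.queryList x).take t).toFinset
/-! ### The progress measure for the hard distribution `x^ℓ` -/

/-- Column `j` is compromised (for the input `x^ℓ`), given the set `Q` of queried cells:
the zero cell `(ℓ j, j)` has been queried, or more than `n/2` cells of column `j` have been
queried. -/
def compromisedCol (n m : ℕ) (ℓ : Fin m → Fin n) (Q : Finset (Fin n × Fin m))
    (j : Fin m) : Prop :=
  (ℓ j, j) ∈ Q ∨ n < 2 * (Q.filter fun c => c.2 = j).card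

/-- The progress measure `I_t = A_t + (2/n)·B_t` of the decision tree `T` on the input `x^ℓ`
after `t` queries, where `A_t` is the number of compromised columns and `B_t` is the number
of queried cells lying outside compromised columns. -/
noncomputable def Imeasure (n m : ℕ)
    (T : DTree (Fin n × Fin m) (PSym n m (Fin n × Fin m))) (ℓ : Fin m → Fin n) (t : ℕ) : ℝ :=
  ({j : Fin m |
      compromisedCol n m ℓ (queriedUpTo T (xhard n m (Fin n × Fin m) ℓ) t) j}.ncard : ℝ) +
    (2 / n) * ({c : Fin n × Fin m | c ∈ queriedUpTo T (xhard n m (Fin n × Fin m) ℓ) t ∧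
      ¬ compromisedCol n m ℓ (queriedUpTo T (xhard n m (Fin n × Fin m) ℓ) t) c.2}.ncard : ℝ)
/-! ### The balanced binary tree, via root-to-node paths -/

/-- The node set of the balanced binary tree with `m` leaves: each node is identified with
the left/right path from the root to it, so the nodes are exactly the prefixes of the
root-to-leaf paths. -/
def treeNodes (m : ℕ) : Finset (List Bool) :=
  (Finset.range m).biUnion fun j => (treePath m j).inits.toFinset

/-- The leaves of the balanced binary tree with `m` leaves. -/
def leafNodes (m : ℕ) : Finset (List Bool) :=
  (Finset.range m).image fun j => treePath m j

/-- The internal nodes of the balanced binary tree with `m` leaves. -/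
def internalNodes (m : ℕ) : Finset (List Bool) :=
  treeNodes m \ leafNodes m

/-- The subtree rooted at a node `u`: all nodes of which `u` is a prefix. -/
def subtreeOf (m : ℕ) (u : List Bool) : Finset (List Bool) :=
  (treeNodes m).filter fun w => u <+: w

/-! ### The hard distribution for `h_{1,n,m}` -/

/-- A parameter quadruple `(v, π, ℓᴸ, ℓᴺ)` for the hard distribution: a bit `v`, a map `π`
from internal tree nodes to columns, and row maps `ℓᴸ, ℓᴺ` for leaves resp. internal nodes. -/
abbrev HardQ (n m : ℕ) : Type :=
  Bool × ({u : List Bool // u ∈ internalNodes m} → Fin m) × (Fin m → Fin n) × (Fin m → Fin n)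

/-- The valid parameter quadruples: `π` injective and `ℓᴸ j ≠ ℓᴺ j` for all `j`. -/
noncomputable def hardSet (n m : ℕ) : Finset (HardQ n m) :=
  Finset.univ.filter fun q => Function.Injective q.2.1 ∧ ∀ j, q.2.2.1 j ≠ q.2.2.2 j

/-- The column of the root of the tree (`none` if the tree has no internal node). -/
noncomputable def rootCol (n m : ℕ) (q : HardQ n m) : Option (Fin m) :=
  if h : ([] : List Bool) ∈ internalNodes m then some (q.2.1 ⟨[], h⟩) else none

/-- The cell where a child node `w` of an internal node is placed: internal nodes go to
cell `(ℓᴺ (π w), π w)`, the leaf labeled `j` goes to cell `(ℓᴸ j, j)`, and the removed leaf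
(the one labeled by the root's column) yields a null pointer. -/
noncomputable def childCell (n m : ℕ) (q : HardQ n m) (w : List Bool) :
    Option (Fin n × Fin m) :=
  if h : w ∈ internalNodes m then some (q.2.2.2 (q.2.1 ⟨w, h⟩), q.2.1 ⟨w, h⟩)
  else if h2 : ∃ j : Fin m, w = treePath m j.1 ∧ some j ≠ rootCol n m q then
    some (q.2.2.1 (Classical.choose h2), Classical.choose h2)
  else none

/-- The input of the hard distribution determined by the parameter quadruple `q`:
the internal node `u` of the tree is placed at cell `(ℓᴺ (π u), π u)` with left and right
pointers to the cells of its children, value `v` and a self-loop internal pointer if `u` is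
the root, and value 0 otherwise; for `j ≠ π(root)`, the leaf labeled `j` is placed at cell
`(ℓᴸ j, j)` with value 0 and null pointers; all the remaining cells hold `(1,⊥,⊥,⊥)`. -/
noncomputable def hardInput (n m : ℕ) (q : HardQ n m) :
    Fin n × Fin m → PSym n m (Fin n × Fin m) :=
  fun c =>
    if h : ∃ u : {u : List Bool // u ∈ internalNodes m}, q.2.1 u = c.2 ∧ q.2.2.2 c.2 = c.1 then
      { val := if (Classical.choose h).1 = [] then q.1 else false
        lp := childCell n m q ((Classical.choose h).1 ++ [false])
        rp := childCell n m q ((Classical.choose h).1 ++ [true])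
        bp := if (Classical.choose h).1 = [] then some c else none }
    else if some c.2 ≠ rootCol n m q ∧ c.1 = q.2.2.1 c.2 then PSym.zero n m (Fin n × Fin m)
    else PSym.one n m (Fin n × Fin m)

/-- Column `j` directly satisfies (i) or (ii): one of the cells `(ℓᴸ j, j)`, `(ℓᴺ j, j)` has
been queried, or more than half of the cells of column `j` have been queried. -/
def colBad (n m : ℕ) (q : HardQ n m) (Q : Finset (Fin n × Fin m)) (j : Fin m) : Prop :=
  (q.2.2.1 j, j) ∈ Q ∨ (q.2.2.2 j, j) ∈ Q ∨ n < 2 * (Q.filter fun c => c.2 = j).card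

/-- Column `j` is compromised: it satisfies (i) or (ii), or some ancestor `u` of `π⁻¹(j)`
in the tree is such that column `π u` satisfies (i) or (ii). -/
def compromisedCol19 (n m : ℕ) (q : HardQ n m) (Q : Finset (Fin n × Fin m))
    (j : Fin m) : Prop :=
  colBad n m q Q j ∨
  ∃ w u : {u : List Bool // u ∈ internalNodes m}, q.2.1 w = j ∧
    u.1 <+: w.1 ∧ u.1 ≠ w.1 ∧ colBad n m q Q (q.2.1 u)

/-- The progress measure `I_t = min{A_t + (4·C0·log₂ m / n)·B_t, m/2}` of the decision tree
`D` on the hard-distribution input given by `q` after `t` queries, where `A_t` is the number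
of compromised columns and `B_t` the number of queried cells outside compromised columns. -/
noncomputable def Imeasure19 (n m : ℕ) (C0 : ℝ)
    (D : DTree (Fin n × Fin m) (PSym n m (Fin n × Fin m))) (q : HardQ n m) (t : ℕ) : ℝ :=
  min
    (({j : Fin m | compromisedCol19 n m q (queriedUpTo D (hardInput n m q) t) j}.ncard : ℝ) +
      (4 * C0 * Real.logb 2 m / n) *
        ({c : Fin n × Fin m | c ∈ queriedUpTo D (hardInput n m q) t ∧
          ¬ compromisedCol19 n m q (queriedUpTo D (hardInput n m q) t) c.2}.ncard : ℝ))
    (m / 2)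
namespace S4

open DTree

/-! ### Basics -/

theorem eval_eq_of_agree {ι σ : Type} (T : DTree ι σ) (x y : ι → σ)
    (h : ∀ c ∈ T.queryList x, y c = x c) : T.eval y = T.eval x := by
  induction T with
  | leaf b => rfl
  | node v ch ih =>
      have hv : y v = x v := h v (by simp [queryList])
      simp only [eval, queryList, hv]
      exact ih (x v) fun c hc => h c (by simp [queryList, hc])

theorem gFun_xhard_false (n m : ℕ) (ℓ : Fin m → Fin n) :
    gFun n m (xhard n m (Fin n × Fin m) ℓ) = false := by
  rw [gFun, if_neg]
  rintro ⟨b, a, h1, -⟩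
  have := (h1 b).mpr rfl (ℓ b)
  simp [xhard, PSym.zero] at this

/-! ### treePath facts -/

theorem bitsPath_length (k j : ℕ) : (bitsPath k j).length = k := by
  simp [bitsPath]

theorem bitsPath_inj {k j j' : ℕ} (hj : j < 2 ^ k) (hj' : j' < 2 ^ k)
    (h : bitsPath k j = bitsPath k j') : j = j' := by
  rw [bitsPath, bitsPath, List.map_inj_left] at h
  refine Nat.eq_of_testBit_eq fun i => ?_
  by_cases hi : i < k
  · exact h i (by simp [hi])
  · rw [Nat.testBit_eq_false_of_lt (lt_of_lt_of_le hj (Nat.pow_le_pow_right (by norm_num) (le_of_not_gt hi))),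
      Nat.testBit_eq_false_of_lt (lt_of_lt_of_le hj' (Nat.pow_le_pow_right (by norm_num) (le_of_not_gt hi)))]

theorem treePath_length_le (m j : ℕ) : (treePath m j).length ≤ Nat.log 2 m + 1 := by
  rw [treePath]
  split_ifs <;> simp [bitsPath_length]

theorem treePath_ne_nil {m : ℕ} (hm : 2 ≤ m) (j : ℕ) : treePath m j ≠ [] := by
  have hk : 1 ≤ Nat.log 2 m := Nat.log_pos (by norm_num) hm
  rw [treePath]
  split_ifs <;>
    [skip; simp; skip] <;>
    · intro h
      have := congrArg List.length h
      simp [bitsPath_length] at this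
      omega

theorem treePath_prefix_free {m j j' : ℕ} (hm : 2 ≤ m) (hj : j < m) (hj' : j' < m)
    (h : treePath m j <+: treePath m j') : j = j' := by
  have h2k : 2 ^ Nat.log 2 m ≤ m := Nat.pow_log_le_self 2 (by omega)
  have h2k' : m < 2 ^ (Nat.log 2 m + 1) := Nat.lt_pow_succ_log_self (by norm_num) m
  rw [treePath, treePath] at h
  generalize hkk : Nat.log 2 m = k at h h2k h2k'
  have hrk : m - 2 ^ k < 2 ^ k := by
    have : 2 ^ (k+1) = 2 ^ k + 2 ^ k := by ring
    omega
  by_cases h0 : m - 2 ^ k = 0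
  · rw [if_pos h0, if_pos h0] at h
    exact bitsPath_inj (by omega) (by omega)
      (h.eq_of_length (by rw [bitsPath_length, bitsPath_length]))
  · rw [if_neg h0, if_neg h0] at h
    by_cases hA : j < 2 * (m - 2 ^ k) <;> by_cases hB : j' < 2 * (m - 2 ^ k)
    · rw [if_pos hA, if_pos hB] at h
      have he := h.eq_of_length (by simp [bitsPath_length])
      have h1 := List.append_inj' he (by simp)
      have hd : j / 2 = j' / 2 := by
        refine bitsPath_inj ?_ ?_ h1.1 <;> omega
      have hmod : j % 2 = j' % 2 := by
        have := h1.2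
        simp only [List.cons.injEq] at this
        rcases Nat.mod_two_eq_zero_or_one j with h2 | h2 <;>
          rcases Nat.mod_two_eq_zero_or_one j' with h3 | h3 <;>
          simp [h2, h3] at this ⊢
      omega
    · rw [if_pos hA, if_neg hB] at h
      have := h.length_le
      simp [bitsPath_length] at this
    · rw [if_neg hA, if_pos hB] at h
      rcases List.prefix_concat_iff.mp h with h | h
      · have := congrArg List.length h
        simp [bitsPath_length] at this
      · have he := h.eq_of_length (by rw [bitsPath_length, bitsPath_length])
        have : j - (m - 2 ^ k) = j' / 2 := by
          refine bitsPath_inj ?_ ?_ he <;> omega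
        omega
    · rw [if_neg hA, if_neg hB] at h
      have he := h.eq_of_length (by rw [bitsPath_length, bitsPath_length])
      have : j - (m - 2 ^ k) = j' - (m - 2 ^ k) := by
        refine bitsPath_inj ?_ ?_ he <;> omega
      omega

/-! ### Encoding of binary strings -/

def enc (p : List Bool) : ℕ := p.foldl (fun a b => 2 * a + cond b 1 0) 1

theorem enc_snoc (p : List Bool) (b : Bool) :
    enc (p ++ [b]) = 2 * enc p + cond b 1 0 := by
  simp [enc, List.foldl_append]

theorem enc_pos (p : List Bool) : 0 < enc p := by
  induction p using List.reverseRecOn with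
  | nil => simp [enc]
  | append_singleton l a ih => rw [enc_snoc]; omega

theorem enc_lt (p : List Bool) : enc p < 2 ^ (p.length + 1) := by
  induction p using List.reverseRecOn with
  | nil => simp [enc]
  | append_singleton l a ih =>
      rw [enc_snoc]
      have : cond a 1 0 ≤ 1 := by cases a <;> simp
      simp only [List.length_append, List.length_singleton]
      have h2 : 2 ^ (l.length + 1 + 1) = 2 * 2 ^ (l.length + 1) := by ring
      omega

theorem enc_inj : ∀ p q : List Bool, enc p = enc q → p = q := by
  intro p
  induction p using List.reverseRecOn with
  | nil =>
      intro q
      induction q using List.reverseRecOn with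
      | nil => intro; rfl
      | append_singleton l a ih =>
          rw [enc_snoc]
          have := enc_pos l
          have : enc ([] : List Bool) = 1 := by simp [enc]
          intro hq
          cases a <;> simp at hq <;> omega
  | append_singleton l a ih =>
      intro q
      induction q using List.reverseRecOn with
      | nil =>
          rw [enc_snoc]
          have := enc_pos l
          have h1 : enc ([] : List Bool) = 1 := by simp [enc]
          intro hq
          cases a <;> simp at hq <;> omega
      | append_singleton l' a' ih' =>
          rw [enc_snoc, enc_snoc]
          intro hq
          have hba : a = a' ∧ enc l = enc l' := by
            cases a <;> cases a' <;> simp at hq ⊢ <;> omega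
          rw [ih l' hba.2, hba.1]

end S4
namespace S4
open scoped Classical

theorem mem_treeNodes {m : ℕ} {p : List Bool} :
    p ∈ treeNodes m ↔ ∃ j < m, p <+: treePath m j := by
  simp [treeNodes, List.mem_inits]

theorem treePath_fin_inj {m : ℕ} (hm : 2 ≤ m) {j j' : Fin m}
    (h : treePath m (j : ℕ) = treePath m (j' : ℕ)) : j = j' :=
  Fin.ext (treePath_prefix_free hm j.2 j'.2 (h ▸ List.prefix_refl _))

/-- The internal non-root nodes of the balanced tree. -/
noncomputable def Dfin (m : ℕ) : Finset (List Bool) :=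
  (treeNodes m).filter fun p => p ≠ [] ∧ ∀ j : Fin m, p ≠ treePath m (j : ℕ)

theorem mem_Dfin {m : ℕ} {p : List Bool} :
    p ∈ Dfin m ↔ (∃ j < m, p <+: treePath m j) ∧ p ≠ [] ∧
      ∀ j : Fin m, p ≠ treePath m (j : ℕ) := by
  simp [Dfin, mem_treeNodes]

theorem Dfin_length_le {m : ℕ} {p : List Bool} (hp : p ∈ Dfin m) :
    p.length ≤ Nat.log 2 m := by
  rw [mem_Dfin] at hp
  obtain ⟨⟨j, hjm, hpre⟩, -, hne⟩ := hp
  have h1 : p.length ≤ (treePath m j).length := hpre.length_le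
  have h2 : (treePath m j).length ≤ Nat.log 2 m + 1 := treePath_length_le m j
  rcases Nat.lt_or_ge p.length (treePath m j).length with h | h
  · omega
  · exact absurd (hpre.eq_of_length (le_antisymm hpre.length_le h)) (hne ⟨j, hjm⟩)

theorem Dfin_card_le {m : ℕ} (hm : 1 ≤ m) : (Dfin m).card ≤ 2 * m := by
  have h1 : (Dfin m).card ≤ (Finset.range (2 ^ (Nat.log 2 m + 1))).card := by
    apply Finset.card_le_card_of_injOn enc
    · intro p hp
      rw [Finset.mem_coe, Finset.mem_range]
      calc enc p < 2 ^ (p.length + 1) := enc_lt p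
        _ ≤ 2 ^ (Nat.log 2 m + 1) :=
          Nat.pow_le_pow_right (by norm_num) (by have := Dfin_length_le hp; omega)
    · intro p _ q _ h
      exact enc_inj p q h
  rw [Finset.card_range] at h1
  have h2 : 2 ^ Nat.log 2 m ≤ m := Nat.pow_log_le_self 2 (by omega)
  calc (Dfin m).card ≤ 2 ^ (Nat.log 2 m + 1) := h1
    _ = 2 * 2 ^ Nat.log 2 m := by ring
    _ ≤ 2 * m := by omega

end S4
namespace S4
open scoped Classical

/-- Placement of the tree nodes into cells. -/
noncomputable def Cmap {n m : ℕ} (ℓ : Fin m → Fin n) (a : Fin n × Fin m) (b : Fin m)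
    (θ : {p // p ∈ Dfin m} → Fin n × Fin m) (p : List Bool) : Option (Fin n × Fin m) :=
  if p = [] then some a
  else if h : ∃ j : Fin m, p = treePath m (j : ℕ) then
    (if Classical.choose h = b then none
     else some (ℓ (Classical.choose h), Classical.choose h))
  else if h2 : p ∈ Dfin m then some (θ ⟨p, h2⟩) else none

/-- The 1-input extending the queried part of `x^ℓ`. -/
noncomputable def yinp {n m : ℕ} (ℓ : Fin m → Fin n) (a : Fin n × Fin m) (b : Fin m)
    (G : Finset (Fin m)) (θ : {p // p ∈ Dfin m} → Fin n × Fin m)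
    (c : Fin n × Fin m) : PSym n m (Fin n × Fin m) :=
  if c = a then ⟨true, Cmap ℓ a b θ [false], Cmap ℓ a b θ [true], some a⟩
  else if h : ∃ pp : {p // p ∈ Dfin m}, θ pp = c then
    ⟨true, Cmap ℓ a b θ ((Classical.choose h).1 ++ [false]),
      Cmap ℓ a b θ ((Classical.choose h).1 ++ [true]), none⟩
  else if c.1 = ℓ c.2 then
    (if c.2 = b then PSym.one n m _
     else if c.2 ∈ G then ⟨false, none, none, some a⟩
     else PSym.zero n m _)
  else PSym.one n m _

section Construction

variable {n m : ℕ} {ℓ : Fin m → Fin n} {a : Fin n × Fin m} {b : Fin m}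
  {G : Finset (Fin m)} {θ : {p // p ∈ Dfin m} → Fin n × Fin m}

theorem Cmap_nil : Cmap ℓ a b θ [] = some a := by rw [Cmap, if_pos rfl]

theorem Cmap_leaf (hm : 2 ≤ m) (j : Fin m) (hj : j ≠ b) :
    Cmap ℓ a b θ (treePath m (j : ℕ)) = some (ℓ j, j) := by
  rw [Cmap, if_neg (treePath_ne_nil hm _)]
  have h : ∃ j' : Fin m, treePath m (j : ℕ) = treePath m ((j' : Fin m) : ℕ) := ⟨j, rfl⟩
  rw [dif_pos h]
  have hch : Classical.choose h = j := (treePath_fin_inj hm (Classical.choose_spec h)).symm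
  rw [hch, if_neg hj]

theorem Cmap_D {p : List Bool} (hp : p ∈ Dfin m) :
    Cmap ℓ a b θ p = some (θ ⟨p, hp⟩) := by
  have h1 := mem_Dfin.mp hp
  rw [Cmap, if_neg h1.2.1, dif_neg, dif_pos hp]
  rintro ⟨j, hj⟩
  exact h1.2.2 j hj

theorem yinp_root : yinp ℓ a b G θ a =
    ⟨true, Cmap ℓ a b θ [false], Cmap ℓ a b θ [true], some a⟩ := by
  rw [yinp, if_pos rfl]

theorem yinp_theta (ha2 : a.2 = b) (Hθb : ∀ pp, (θ pp).2 ≠ b)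
    (HθI : Function.Injective θ) (pp : {p // p ∈ Dfin m}) :
    yinp ℓ a b G θ (θ pp) =
      ⟨true, Cmap ℓ a b θ (pp.1 ++ [false]), Cmap ℓ a b θ (pp.1 ++ [true]), none⟩ := by
  rw [yinp, if_neg, dif_pos ⟨pp, rfl⟩]
  · have h : ∃ pp' : {p // p ∈ Dfin m}, θ pp' = θ pp := ⟨pp, rfl⟩
    have := HθI (Classical.choose_spec h)
    rw [this]
  · intro hc
    exact Hθb pp (by rw [hc, ha2])

theorem yinp_leaf (ha2 : a.2 = b) (Hθ2 : ∀ pp, (θ pp).1 ≠ ℓ (θ pp).2)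
    (j : Fin m) (hj : j ≠ b) :
    yinp ℓ a b G θ (ℓ j, j) =
      (if j ∈ G then ⟨false, none, none, some a⟩ else PSym.zero n m (Fin n × Fin m)) := by
  rw [yinp, if_neg, dif_neg]
  · have h1 : ((ℓ j, j) : Fin n × Fin m).1 = ℓ ((ℓ j, j) : Fin n × Fin m).2 := rfl
    rw [if_pos h1, if_neg hj]
  · rintro ⟨pp, hpp⟩
    exact Hθ2 pp (by rw [hpp])
  · intro hc
    exact hj (by rw [← ha2, ← hc])

theorem followPath_cons_eq (x : Fin n × Fin m → PSym n m (Fin n × Fin m))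
    (c c' : Fin n × Fin m) (d : Bool) (q : List Bool)
    (h : (if d then (x c).rp else (x c).lp) = some c') :
    followPath x c (d :: q) = followPath x c' q := by
  simp [followPath, h]

theorem followPath_main (hm : 2 ≤ m) (ha2 : a.2 = b)
    (Hθb : ∀ pp, (θ pp).2 ≠ b) (Hθ2 : ∀ pp, (θ pp).1 ≠ ℓ (θ pp).2)
    (HθI : Function.Injective θ) (j : Fin m) (hj : j ≠ b) :
    ∀ (q p : List Bool) (c : Fin n × Fin m), p ++ q = treePath m (j : ℕ) →
      Cmap ℓ a b θ p = some c →
      followPath (yinp ℓ a b G θ) c q = some (ℓ j, j) := by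
  intro q
  induction q with
  | nil =>
      intro p c hp hc
      rw [List.append_nil] at hp
      subst hp
      rw [Cmap_leaf hm j hj] at hc
      cases hc
      rfl
  | cons d q' ih =>
      intro p c hp hc
      have hptr : (yinp ℓ a b G θ c).lp = Cmap ℓ a b θ (p ++ [false]) ∧
          (yinp ℓ a b G θ c).rp = Cmap ℓ a b θ (p ++ [true]) := by
        by_cases hpnil : p = []
        · subst hpnil
          rw [Cmap_nil] at hc
          cases hc
          rw [yinp_root]
          exact ⟨by simp, by simp⟩
        · by_cases hpleaf : ∃ j' : Fin m, p = treePath m ((j' : Fin m) : ℕ)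
          · exfalso
            obtain ⟨j', hj'⟩ := hpleaf
            have hpre : treePath m ((j' : Fin m) : ℕ) <+: treePath m (j : ℕ) :=
              hj' ▸ ⟨d :: q', hp⟩
            have hjj : (j' : ℕ) = (j : ℕ) := treePath_prefix_free hm j'.2 j.2 hpre
            have : p = treePath m (j : ℕ) := by rw [hj', hjj]
            rw [← hp] at this
            have := congrArg List.length this
            simp at this
          · have hpD : p ∈ Dfin m := mem_Dfin.mpr
              ⟨⟨(j : ℕ), j.2, ⟨d :: q', hp⟩⟩, hpnil, fun j' h' => hpleaf ⟨j', h'⟩⟩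
            rw [Cmap_D hpD] at hc
            cases hc
            rw [yinp_theta ha2 Hθb HθI]
            exact ⟨rfl, rfl⟩
      have hchild : ∃ c', Cmap ℓ a b θ (p ++ [d]) = some c' := by
        by_cases hpl : ∃ j' : Fin m, p ++ [d] = treePath m ((j' : Fin m) : ℕ)
        · obtain ⟨j', hj'⟩ := hpl
          have hpre : treePath m ((j' : Fin m) : ℕ) <+: treePath m (j : ℕ) :=
            hj' ▸ ⟨q', by simpa [List.append_assoc] using hp⟩
          have hjj : j' = j := Fin.ext (treePath_prefix_free hm j'.2 j.2 hpre)
          subst hjj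
          exact ⟨(ℓ j', j'), by rw [hj']; exact Cmap_leaf hm j' hj⟩
        · have hpD : p ++ [d] ∈ Dfin m := mem_Dfin.mpr
            ⟨⟨(j : ℕ), j.2, ⟨q', by simpa [List.append_assoc] using hp⟩⟩, by simp,
              fun j' h' => hpl ⟨j', h'⟩⟩
          exact ⟨_, Cmap_D hpD⟩
      obtain ⟨c', hc'⟩ := hchild
      have hstep : (if d then (yinp ℓ a b G θ c).rp else (yinp ℓ a b G θ c).lp) = some c' := by
        cases d
        · rw [if_neg (by simp), hptr.1, hc']
        · rw [if_pos rfl, hptr.2, hc']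
      rw [followPath_cons_eq _ _ _ _ _ hstep]
      exact ih (p ++ [d]) c' (by simpa [List.append_assoc] using hp) hc'

end Construction
end S4
namespace S4
open scoped Classical

theorem claimA {n m : ℕ} (hn : 16 ≤ n) (hm : 16 ≤ m) (hme : Even m)
    (ℓ : Fin m → Fin n) (Q : Finset (Fin n × Fin m))
    (hQ : ∀ y : Fin n × Fin m → PSym n m (Fin n × Fin m),
      (∀ c ∈ Q, y c = xhard n m (Fin n × Fin m) ℓ c) → gFun n m y = false) :
    m / 2 ≤ (Finset.univ.filter fun j => compromisedCol n m ℓ Q j).card := by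
  obtain ⟨m2, hm2⟩ := hme
  by_contra hcon
  push_neg at hcon
  set U := Finset.univ.filter (fun j => ¬ compromisedCol n m ℓ Q j) with hUdef
  have hcards := Finset.card_filter_add_card_filter_not
    (s := (Finset.univ : Finset (Fin m))) (p := fun j => compromisedCol n m ℓ Q j)
  have huniv : (Finset.univ : Finset (Fin m)).card = m := by simp
  have hU : m / 2 + 1 ≤ U.card := by rw [hUdef]; omega
  have hUnc : ∀ j ∈ U, (ℓ j, j) ∉ Q ∧ 2 * (Q.filter fun c => c.2 = j).card ≤ n := by
    intro j hj
    have := (Finset.mem_filter.mp hj).2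
    rw [compromisedCol] at this
    push_neg at this
    exact ⟨this.1, by omega⟩
  obtain ⟨b, hbU⟩ : U.Nonempty := Finset.card_pos.mp (by omega)
  obtain ⟨hb1, hb2⟩ := hUnc b hbU
  -- choose the special cell a
  set RB : Finset (Fin n) := ((Q.filter fun c => c.2 = b).image Prod.fst) ∪ {ℓ b} with hRBdef
  have hRB : RB.card ≤ n / 2 + 1 := by
    calc RB.card ≤ ((Q.filter fun c => c.2 = b).image Prod.fst).card + ({ℓ b} : Finset (Fin n)).card :=
          Finset.card_union_le _ _
      _ ≤ (Q.filter fun c => c.2 = b).card + 1 := by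
          have := Finset.card_image_le (s := Q.filter fun c => c.2 = b) (f := Prod.fst)
          simp only [Finset.card_singleton]
          omega
      _ ≤ n / 2 + 1 := by omega
  obtain ⟨ia, hia⟩ : (RBᶜ : Finset (Fin n)).Nonempty := by
    apply Finset.card_pos.mp
    rw [Finset.card_compl]
    have : (Fintype.card (Fin n)) = n := by simp
    omega
  rw [Finset.mem_compl] at hia
  set a : Fin n × Fin m := (ia, b) with hadef
  have haQ : a ∉ Q := by
    intro h
    exact hia (Finset.mem_union_left _ (Finset.mem_image.mpr
      ⟨a, Finset.mem_filter.mpr ⟨h, rfl⟩, rfl⟩))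
  have ha1 : ia ≠ ℓ b := fun h => hia (Finset.mem_union_right _ (by simp [h]))
  -- choose G
  have hUe : m / 2 ≤ (U.erase b).card := by
    rw [Finset.card_erase_of_mem hbU]; omega
  obtain ⟨G, hGsub, hGcard⟩ := Finset.exists_subset_card_eq hUe
  -- free cells and the injection θ
  set FC : Finset (Fin n × Fin m) := (U.erase b).biUnion
    (fun j => (Finset.univ.filter fun i : Fin n => i ≠ ℓ j ∧ (i, j) ∉ Q).image
      fun i => (i, j)) with hFCdef
  have hFCmem : ∀ c ∈ FC, c.2 ≠ b ∧ c.1 ≠ ℓ c.2 ∧ c ∉ Q := by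
    intro c hc
    rw [hFCdef, Finset.mem_biUnion] at hc
    obtain ⟨j, hj, hc⟩ := hc
    rw [Finset.mem_image] at hc
    obtain ⟨i, hi, rfl⟩ := hc
    rw [Finset.mem_filter] at hi
    exact ⟨(Finset.mem_erase.mp hj).1, hi.2.1, hi.2.2⟩
  have hFCcard : 2 * m ≤ FC.card := by
    rw [hFCdef, Finset.card_biUnion]
    · have hterm : ∀ j ∈ U.erase b, 7 ≤
          ((Finset.univ.filter fun i : Fin n => i ≠ ℓ j ∧ (i, j) ∉ Q).image fun i => (i, j)).card := by
        intro j hj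
        rw [Finset.card_image_of_injective _ (fun i i' h => (Prod.mk.injEq _ _ _ _).mp h |>.1)]
        have hj2 := (hUnc j (Finset.mem_of_mem_erase hj)).2
        have hsub : (Finset.univ.filter fun i : Fin n => ¬(i ≠ ℓ j ∧ (i, j) ∉ Q)) ⊆
            ((Q.filter fun c => c.2 = j).image Prod.fst) ∪ {ℓ j} := by
          intro i hi
          rw [Finset.mem_filter] at hi
          push_neg at hi
          by_cases hil : i = ℓ j
          · exact Finset.mem_union_right _ (by simp [hil])
          · exact Finset.mem_union_left _ (Finset.mem_image.mpr
              ⟨(i, j), Finset.mem_filter.mpr ⟨hi.2 hil, rfl⟩, rfl⟩)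
        have hneg : (Finset.univ.filter fun i : Fin n => ¬(i ≠ ℓ j ∧ (i, j) ∉ Q)).card ≤ n / 2 + 1 := by
          calc _ ≤ (((Q.filter fun c => c.2 = j).image Prod.fst) ∪ {ℓ j}).card :=
                Finset.card_le_card hsub
            _ ≤ ((Q.filter fun c => c.2 = j).image Prod.fst).card + 1 := by
                have := Finset.card_union_le ((Q.filter fun c => c.2 = j).image Prod.fst)
                  ({ℓ j} : Finset (Fin n))
                simp only [Finset.card_singleton] at this
                omega
            _ ≤ (Q.filter fun c => c.2 = j).card + 1 := by
                have := Finset.card_image_le (s := Q.filter fun c => c.2 = j) (f := Prod.fst)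
                omega
            _ ≤ n / 2 + 1 := by omega
        have htot := Finset.card_filter_add_card_filter_not
          (s := (Finset.univ : Finset (Fin n))) (p := fun i : Fin n => i ≠ ℓ j ∧ (i, j) ∉ Q)
        have : (Finset.univ : Finset (Fin n)).card = n := by simp
        omega
      calc 2 * m ≤ 7 * (m / 2) := by omega
        _ ≤ 7 * (U.erase b).card := by omega
        _ = (U.erase b).card • 7 := by rw [smul_eq_mul, mul_comm]
        _ ≤ _ := Finset.card_nsmul_le_sum _ _ _ hterm
    · intro j1 h1 j2 h2 hne
      rw [Function.onFun, Finset.disjoint_left]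
      intro c hc1 hc2
      rw [Finset.mem_image] at hc1 hc2
      obtain ⟨i1, -, rfl⟩ := hc1
      obtain ⟨i2, -, h⟩ := hc2
      exact hne ((Prod.mk.injEq _ _ _ _).mp h.symm |>.2.symm ▸ rfl)
  have hDFC : (Dfin m).card ≤ FC.card := le_trans (Dfin_card_le (by omega)) hFCcard
  set θ : {p // p ∈ Dfin m} → Fin n × Fin m := fun p =>
    ((FC.equivFin.symm (Fin.castLE hDFC ((Dfin m).equivFin p))) : {c // c ∈ FC}).1 with hθdef
  have HθI : Function.Injective θ := by
    intro p q h
    have h1 : (FC.equivFin.symm (Fin.castLE hDFC ((Dfin m).equivFin p))) =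
        (FC.equivFin.symm (Fin.castLE hDFC ((Dfin m).equivFin q))) := Subtype.ext h
    have h2 := FC.equivFin.symm.injective h1
    have h3 := Fin.castLE_injective hDFC h2
    exact (Dfin m).equivFin.injective h3
  have HθFC : ∀ pp, θ pp ∈ FC := fun pp =>
    ((FC.equivFin.symm (Fin.castLE hDFC ((Dfin m).equivFin pp))) : {c // c ∈ FC}).2
  have Hθb : ∀ pp, (θ pp).2 ≠ b := fun pp => (hFCmem _ (HθFC pp)).1
  have Hθ2 : ∀ pp, (θ pp).1 ≠ ℓ (θ pp).2 := fun pp => (hFCmem _ (HθFC pp)).2.1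
  have Hθ3 : ∀ pp, θ pp ∉ Q := fun pp => (hFCmem _ (HθFC pp)).2.2
  have ha2 : a.2 = b := rfl
  have hm2' : 2 ≤ m := by omega
  set y := yinp ℓ a b G θ with hydef
  -- G properties
  have hGne : ∀ j ∈ G, j ≠ b := fun j hj => (Finset.mem_erase.mp (hGsub hj)).1
  have hGQ : ∀ j ∈ G, (ℓ j, j) ∉ Q := fun j hj =>
    (hUnc j (Finset.mem_of_mem_erase (hGsub hj))).1
  -- agreement on Q
  have hagree : ∀ c ∈ Q, y c = xhard n m (Fin n × Fin m) ℓ c := by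
    intro c hc
    rw [hydef, yinp, if_neg (fun h => haQ (by rw [← h]; exact hc)),
      dif_neg (fun h => Hθ3 (Classical.choose h) ((Classical.choose_spec h).symm ▸ hc))]
    rw [xhard]
    by_cases h1 : c.1 = ℓ c.2
    · rw [if_pos h1, if_pos h1]
      have hcel : c = (ℓ c.2, c.2) := Prod.ext h1 rfl
      rw [if_neg, if_neg]
      · intro hG
        exact hGQ c.2 hG (hcel ▸ hc)
      · intro hb
        exact hb1 (by rw [← hb, ← hcel]; exact hc)
    · rw [if_neg h1, if_neg h1]
  -- gCond
  have hgc : gCond n m y b a := by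
    refine ⟨?_, ha2, ?_, ?_, ?_⟩
    · intro j
      constructor
      · intro hall
        by_contra hj
        have := hall (ℓ j)
        rw [hydef, yinp_leaf ha2 Hθ2 j hj] at this
        split_ifs at this <;> simp [PSym.zero] at this
      · intro hjb i
        rw [hjb]
        by_cases hca : (i, b) = a
        · rw [hca, hydef, yinp_root]
        · rw [hydef, yinp, if_neg hca, dif_neg]
          · dsimp only
            split_ifs <;> simp [PSym.one]
          · rintro ⟨pp, hpp⟩
            exact Hθb pp (by rw [hpp])
    · intro i
      constructor
      · intro hne
        by_contra hca
        apply hne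
        rw [hydef, yinp, if_neg hca, dif_neg]
        · dsimp only
          split_ifs <;> rfl
        · rintro ⟨pp, hpp⟩
          exact Hθb pp (by rw [hpp])
      · intro hca
        rw [hca, hydef, yinp_root]
        simp [PSym.one]
    · intro j hj
      refine ⟨(ℓ j, j), ?_, rfl, ?_⟩
      · exact followPath_main hm2' ha2 Hθb Hθ2 HθI j hj (treePath m (j : ℕ)) [] a
          (by simp) Cmap_nil
      · rw [hydef, yinp_leaf ha2 Hθ2 j hj]
        split_ifs <;> simp [PSym.zero]
    · have hset : {j : Fin m | j ≠ b ∧ ∃ cl, followPath y a (treePath m (j : ℕ)) = some cl ∧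
          (y cl).bp = some a} = ↑G := by
        ext j
        simp only [Set.mem_setOf_eq, Finset.mem_coe]
        constructor
        · rintro ⟨hj, cl, hfp, hbp⟩
          have hfp' : followPath y a (treePath m (j : ℕ)) = some (ℓ j, j) :=
            followPath_main hm2' ha2 Hθb Hθ2 HθI j hj (treePath m (j : ℕ)) [] a
              (by simp) Cmap_nil
          rw [hfp'] at hfp
          cases hfp
          by_contra hG
          rw [hydef, yinp_leaf ha2 Hθ2 j hj, if_neg hG] at hbp
          simp [PSym.zero] at hbp
        · intro hjG
          refine ⟨hGne j hjG, (ℓ j, j), ?_, ?_⟩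
          · exact followPath_main hm2' ha2 Hθb Hθ2 HθI j (hGne j hjG) (treePath m (j : ℕ)) [] a
              (by simp) Cmap_nil
          · rw [hydef, yinp_leaf ha2 Hθ2 j (hGne j hjG), if_pos hjG]
      rw [hset, Set.ncard_coe_finset, hGcard]
  have hfalse := hQ y hagree
  rw [gFun, if_pos ⟨b, a, hgc⟩] at hfalse
  exact Bool.noConfusion hfalse

end S4
namespace S4
open scoped Classical

/-- Knowledge state: per column, the set of still-possible rows, and a query counter. -/
abbrev Sig (n m : ℕ) := (Fin m → Finset (Fin n)) × (Fin m → ℕ)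

noncomputable def stp {n m : ℕ} (ℓ : Fin m → Fin n) (σ : Sig n m) (c : Fin n × Fin m) :
    Sig n m :=
  (Function.update σ.1 c.2 (if ℓ c.2 = c.1 then σ.1 c.2 ∩ {c.1} else σ.1 c.2 \ {c.1}),
   Function.update σ.2 c.2 (σ.2 c.2 + 1))

noncomputable def finS {n m : ℕ} (ℓ : Fin m → Fin n) (l : List (Fin n × Fin m))
    (σ : Sig n m) : Sig n m :=
  l.foldl (stp ℓ) σ

theorem finS_nil {n m : ℕ} (ℓ : Fin m → Fin n) (σ : Sig n m) : finS ℓ [] σ = σ := rfl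

theorem finS_cons {n m : ℕ} (ℓ : Fin m → Fin n) (c : Fin n × Fin m)
    (l : List (Fin n × Fin m)) (σ : Sig n m) :
    finS ℓ (c :: l) σ = finS ℓ l (stp ℓ σ c) := rfl

theorem finS_fst_subset {n m : ℕ} (ℓ : Fin m → Fin n) (l : List (Fin n × Fin m)) :
    ∀ (σ : Sig n m) (j : Fin m), (finS ℓ l σ).1 j ⊆ σ.1 j := by
  induction l with
  | nil => intro σ j; exact subset_rfl
  | cons c l ih =>
      intro σ j
      refine (ih (stp ℓ σ c) j).trans ?_
      rw [stp]
      dsimp only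
      rcases eq_or_ne j c.2 with h | h
      · subst h
        rw [Function.update_self]
        split_ifs
        · exact Finset.inter_subset_left
        · exact Finset.sdiff_subset
      · rw [Function.update_of_ne h]

theorem finS_cnt {n m : ℕ} (ℓ : Fin m → Fin n) (l : List (Fin n × Fin m)) :
    ∀ (σ : Sig n m) (j : Fin m),
      (finS ℓ l σ).2 j = σ.2 j + l.countP (fun c => decide (c.2 = j)) := by
  induction l with
  | nil => intro σ j; simp [finS]
  | cons c l ih =>
      intro σ j
      rw [finS_cons, ih, List.countP_cons, stp]
      dsimp only
      rcases eq_or_ne j c.2 with h | h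
      · subst h
        rw [Function.update_self, if_pos (by simp : (decide (c.2 = c.2)) = true)]
        omega
      · rw [Function.update_of_ne h,
          if_neg (by simp [Ne.symm h] : ¬ (decide (c.2 = j)) = true)]
        omega

theorem finS_hit {n m : ℕ} (ℓ : Fin m → Fin n) (l : List (Fin n × Fin m)) (j : Fin m) :
    ∀ σ : Sig n m, (ℓ j, j) ∈ l → ((finS ℓ l σ).1 j).card ≤ 1 := by
  induction l with
  | nil => intro σ h; simp at h
  | cons c l ih =>
      intro σ hmem
      rcases List.mem_cons.mp hmem with h | h
      · rw [finS_cons]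
        subst h
        have hsub : (finS ℓ l (stp ℓ σ (ℓ j, j))).1 j ⊆ (stp ℓ σ (ℓ j, j)).1 j :=
          finS_fst_subset ℓ l _ j
        have : (stp ℓ σ (ℓ j, j)).1 j = σ.1 j ∩ {ℓ j} := by
          rw [stp]; dsimp only; rw [Function.update_self, if_pos rfl]
        calc ((finS ℓ l (stp ℓ σ (ℓ j, j))).1 j).card
            ≤ ((stp ℓ σ (ℓ j, j)).1 j).card := Finset.card_le_card hsub
          _ ≤ ({ℓ j} : Finset (Fin n)).card := by
              rw [this]; exact Finset.card_le_card Finset.inter_subset_right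
          _ = 1 := Finset.card_singleton _
      · rw [finS_cons]
        exact ih _ h

/-- A column is resolved. -/
def doneCol (n : ℕ) {m : ℕ} (σ : Sig n m) (j : Fin m) : Prop :=
  (σ.1 j).card ≤ 1 ∨ n < 2 * σ.2 j

/-- The potential function. -/
noncomputable def phi (n : ℕ) {m : ℕ} (σ : Sig n m) : ℝ :=
  ∑ j : Fin m, (if doneCol n σ j then (1 : ℝ) else (2 / n) * σ.2 j)

theorem phi_ge_done (n : ℕ) {m : ℕ} (hn : 0 < n) (σ : Sig n m) :
    ((Finset.univ.filter fun j => doneCol n σ j).card : ℝ) ≤ phi n σ := by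
  rw [phi, ← Finset.sum_boole]
  apply Finset.sum_le_sum
  intro j _
  split_ifs with h
  · exact le_refl 1
  · positivity

end S4
namespace S4
open scoped Classical

theorem term_congr {n m : ℕ} (σ σ' : Sig n m) (j' : Fin m)
    (h1 : σ'.1 j' = σ.1 j') (h2 : σ'.2 j' = σ.2 j') :
    (if doneCol n σ' j' then (1 : ℝ) else (2 / n) * σ'.2 j') =
      (if doneCol n σ j' then (1 : ℝ) else (2 / n) * σ.2 j') := by
  have hiff : doneCol n σ' j' ↔ doneCol n σ j' := by simp only [doneCol, h1, h2]
  have hval : (2 / (n:ℝ)) * σ'.2 j' = (2 / n) * σ.2 j' := by rw [h2]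
  exact if_congr hiff rfl hval

theorem phi_split {n m : ℕ} (σ : Sig n m) (j : Fin m) :
    phi n σ = (if doneCol n σ j then (1 : ℝ) else (2 / n) * σ.2 j) +
      ∑ j' ∈ Finset.univ.erase j, (if doneCol n σ j' then (1 : ℝ) else (2 / n) * σ.2 j') :=
  (Finset.add_sum_erase _ _ (Finset.mem_univ j)).symm

theorem main_ineq {n m : ℕ} (hn : 2 ≤ n)
    (T : DTree (Fin n × Fin m) (PSym n m (Fin n × Fin m))) :
    ∀ σ : Sig n m,
      (∀ j, doneCol n σ j ∨ n ≤ (σ.1 j).card + σ.2 j) →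
      ∑ ℓ ∈ Fintype.piFinset σ.1,
          phi n (finS ℓ (DTree.queryList (xhard n m (Fin n × Fin m) ℓ) T) σ) ≤
        ((Fintype.piFinset σ.1).card : ℝ) * phi n σ +
          (6 / n) * ∑ ℓ ∈ Fintype.piFinset σ.1,
            ((DTree.queryList (xhard n m (Fin n × Fin m) ℓ) T).length : ℝ) := by
  have hn0 : (0:ℝ) < n := by exact_mod_cast (by omega : 0 < n)
  induction T with
  | leaf bb =>
      intro σ hInv
      simp only [DTree.queryList, finS_nil, List.length_nil, Nat.cast_zero,
        Finset.sum_const, nsmul_eq_mul, Finset.sum_const_zero, mul_zero, add_zero]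
      exact le_refl _
  | node v ch ih =>
      intro σ hInv
      obtain ⟨i, j⟩ := v
      set σh : Sig n m := (Function.update σ.1 j (σ.1 j ∩ {i}),
        Function.update σ.2 j (σ.2 j + 1)) with hσh
      set σm : Sig n m := (Function.update σ.1 j (σ.1 j \ {i}),
        Function.update σ.2 j (σ.2 j + 1)) with hσm
      have hstph : ∀ ℓ : Fin m → Fin n, ℓ j = i → stp ℓ σ (i, j) = σh := by
        intro ℓ h
        rw [stp, hσh]
        simp [h]
      have hstpm : ∀ ℓ : Fin m → Fin n, ℓ j ≠ i → stp ℓ σ (i, j) = σm := by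
        intro ℓ h
        rw [stp, hσm]
        simp [h]
      have hLh : ∀ ℓ ∈ Fintype.piFinset σh.1, ℓ j = i := by
        intro ℓ hℓ
        have := (Fintype.mem_piFinset.mp hℓ) j
        rw [hσh] at this
        simp only [Function.update_self] at this
        exact Finset.mem_singleton.mp (Finset.mem_of_mem_inter_right this)
      have hLm : ∀ ℓ ∈ Fintype.piFinset σm.1, ℓ j ≠ i := by
        intro ℓ hℓ
        have := (Fintype.mem_piFinset.mp hℓ) j
        rw [hσm] at this
        simp only [Function.update_self] at this
        exact fun hh => (Finset.mem_sdiff.mp this).2 (Finset.mem_singleton.mpr hh)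
      have hunion : Fintype.piFinset σ.1 = Fintype.piFinset σh.1 ∪ Fintype.piFinset σm.1 := by
        ext ℓ
        rw [Finset.mem_union]
        simp only [Fintype.mem_piFinset, hσh, hσm]
        constructor
        · intro h
          by_cases hij : ℓ j = i
          · left
            intro j'
            rcases eq_or_ne j' j with rfl | hne
            · rw [Function.update_self]
              exact Finset.mem_inter.mpr ⟨h j', Finset.mem_singleton.mpr hij⟩
            · rw [Function.update_of_ne hne]
              exact h j'
          · right
            intro j'
            rcases eq_or_ne j' j with rfl | hne
            · rw [Function.update_self]
              exact Finset.mem_sdiff.mpr ⟨h j', fun hmem => hij (Finset.mem_singleton.mp hmem)⟩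
            · rw [Function.update_of_ne hne]
              exact h j'
        · rintro (h | h) j'
          · rcases eq_or_ne j' j with rfl | hne
            · have := h j'
              rw [Function.update_self] at this
              exact Finset.mem_of_mem_inter_left this
            · have := h j'
              rwa [Function.update_of_ne hne] at this
          · rcases eq_or_ne j' j with rfl | hne
            · have := h j'
              rw [Function.update_self] at this
              exact (Finset.mem_sdiff.mp this).1
            · have := h j'
              rwa [Function.update_of_ne hne] at this
      have hdisj : Disjoint (Fintype.piFinset σh.1) (Fintype.piFinset σm.1) := by
        rw [Finset.disjoint_left]
        intro ℓ h1 h2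
        exact hLm ℓ h2 (hLh ℓ h1)
      have hxh : ∀ ℓ : Fin m → Fin n, ℓ j = i →
          xhard n m (Fin n × Fin m) ℓ (i, j) = PSym.zero n m (Fin n × Fin m) := by
        intro ℓ h
        rw [xhard, if_pos h.symm]
      have hxm : ∀ ℓ : Fin m → Fin n, ℓ j ≠ i →
          xhard n m (Fin n × Fin m) ℓ (i, j) = PSym.one n m (Fin n × Fin m) := by
        intro ℓ h
        rw [xhard, if_neg (fun hh => h hh.symm)]
      have hInvh : ∀ j', doneCol n σh j' ∨ n ≤ (σh.1 j').card + σh.2 j' := by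
        intro j'
        rcases eq_or_ne j' j with rfl | hne
        · left
          rw [doneCol, hσh]
          left
          simp only [Function.update_self]
          calc (σ.1 j' ∩ {i}).card ≤ ({i} : Finset (Fin n)).card :=
                Finset.card_le_card Finset.inter_subset_right
            _ = 1 := Finset.card_singleton _
        · have h0 := hInv j'
          simp only [doneCol] at h0
          simp only [doneCol, hσh, Function.update_of_ne hne]
          exact h0
      have hInvm : ∀ j', doneCol n σm j' ∨ n ≤ (σm.1 j').card + σm.2 j' := by
        intro j'
        rcases eq_or_ne j' j with rfl | hne
        · have hsd : (σ.1 j').card ≤ (σ.1 j' \ {i}).card + 1 := by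
            rw [Finset.sdiff_singleton_eq_erase]
            by_cases hi : i ∈ σ.1 j'
            · rw [Finset.card_erase_of_mem hi]; omega
            · rw [Finset.erase_eq_of_notMem hi]; omega
          rcases hInv j' with hd | hc
          · left
            rw [doneCol, hσm]
            simp only [Function.update_self]
            rw [doneCol] at hd
            rcases hd with hd | hd
            · left
              calc (σ.1 j' \ {i}).card ≤ (σ.1 j').card :=
                    Finset.card_le_card Finset.sdiff_subset
                _ ≤ 1 := hd
            · right; omega
          · right
            rw [hσm]
            simp only [Function.update_self]
            omega
        · have h0 := hInv j'
          simp only [doneCol] at h0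
          simp only [doneCol, hσm, Function.update_of_ne hne]
          exact h0
      have hcards : ∀ X : Finset (Fin n),
          (Fintype.piFinset (Function.update σ.1 j X)).card =
            X.card * ∏ j' ∈ Finset.univ.erase j, (σ.1 j').card := by
        intro X
        rw [Fintype.card_piFinset]
        have heach : ∀ j' : Fin m, (Function.update σ.1 j X j').card =
            Function.update (fun j'' => (σ.1 j'').card) j X.card j' := by
          intro j'
          rcases eq_or_ne j' j with rfl | hne
          · rw [Function.update_self, Function.update_self]
          · rw [Function.update_of_ne hne, Function.update_of_ne hne]
        rw [Finset.prod_congr rfl fun j' _ => heach j', Finset.erase_eq]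
        exact Finset.prod_update_of_mem (Finset.mem_univ j) _ _
      have hLcard : (Fintype.piFinset σ.1).card =
          (σ.1 j).card * ∏ j' ∈ Finset.univ.erase j, (σ.1 j').card := by
        have := hcards (σ.1 j)
        rwa [Function.update_eq_self] at this
      have hsum3 : (σ.1 j ∩ {i}).card + (σ.1 j \ {i}).card = (σ.1 j).card :=
        Finset.card_inter_add_card_sdiff _ _
      -- the key one-step inequality
      have hkey : ((Fintype.piFinset σh.1).card : ℝ) * phi n σh +
          ((Fintype.piFinset σm.1).card : ℝ) * phi n σm ≤
          ((Fintype.piFinset σ.1).card : ℝ) * phi n σ +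
            (6 / n) * ((Fintype.piFinset σ.1).card : ℝ) := by
        set rest := ∑ j' ∈ Finset.univ.erase j,
          (if doneCol n σ j' then (1 : ℝ) else (2 / n) * σ.2 j') with hrest
        have hrest_nn : 0 ≤ rest := by
          rw [hrest]
          apply Finset.sum_nonneg
          intro j' _
          split_ifs
          · norm_num
          · positivity
        have hφ : phi n σ = (if doneCol n σ j then (1 : ℝ) else (2 / n) * σ.2 j) + rest := by
          rw [hrest]; exact phi_split σ j
        have hφh : phi n σh =
            (if doneCol n σh j then (1 : ℝ) else (2 / n) * σh.2 j) + rest := by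
          rw [phi_split σh j, hrest]
          congr 1
          refine Finset.sum_congr rfl fun j' hj' => ?_
          have hne := (Finset.mem_erase.mp hj').1
          exact term_congr σ σh j' (by rw [hσh]; exact Function.update_of_ne hne _ _)
            (by rw [hσh]; exact Function.update_of_ne hne _ _)
        have hφm : phi n σm =
            (if doneCol n σm j then (1 : ℝ) else (2 / n) * σm.2 j) + rest := by
          rw [phi_split σm j, hrest]
          congr 1
          refine Finset.sum_congr rfl fun j' hj' => ?_
          have hne := (Finset.mem_erase.mp hj').1
          exact term_congr σ σm j' (by rw [hσm]; exact Function.update_of_ne hne _ _)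
            (by rw [hσm]; exact Function.update_of_ne hne _ _)
        have hσh1j : σh.1 j = σ.1 j ∩ {i} := by rw [hσh]; exact Function.update_self _ _ _
        have hσh2j : σh.2 j = σ.2 j + 1 := by rw [hσh]; exact Function.update_self _ _ _
        have hσm1j : σm.1 j = σ.1 j \ {i} := by rw [hσm]; exact Function.update_self _ _ _
        have hσm2j : σm.2 j = σ.2 j + 1 := by rw [hσm]; exact Function.update_self _ _ _
        have hcardsum : ((Fintype.piFinset σh.1).card : ℝ) +
            ((Fintype.piFinset σm.1).card : ℝ) = ((Fintype.piFinset σ.1).card : ℝ) := by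
          have h1 : (Fintype.piFinset σh.1).card + (Fintype.piFinset σm.1).card =
              (Fintype.piFinset σ.1).card := by
            rw [hσh, hσm, hcards, hcards, hLcard, ← add_mul, hsum3]
          exact_mod_cast h1
        have hdoneh : doneCol n σh j := by
          rw [doneCol, hσh1j]
          left
          calc (σ.1 j ∩ {i}).card ≤ ({i} : Finset (Fin n)).card :=
                Finset.card_le_card Finset.inter_subset_right
            _ = 1 := Finset.card_singleton _
        by_cases hdone : doneCol n σ j
        · have hdonem : doneCol n σm j := by
            rw [doneCol] at hdone ⊢
            rw [hσm1j, hσm2j]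
            rcases hdone with hd | hd
            · left
              calc (σ.1 j \ {i}).card ≤ (σ.1 j).card :=
                    Finset.card_le_card Finset.sdiff_subset
                _ ≤ 1 := hd
            · right; omega
          rw [hφh, if_pos hdoneh, hφm, if_pos hdonem, hφ, if_pos hdone]
          have hrw : ((Fintype.piFinset σh.1).card : ℝ) * (1 + rest) +
              ((Fintype.piFinset σm.1).card : ℝ) * (1 + rest) =
              ((Fintype.piFinset σ.1).card : ℝ) * (1 + rest) := by
            rw [← add_mul, hcardsum]
          have h6 : 0 ≤ 6 / (n:ℝ) * ((Fintype.piFinset σ.1).card : ℝ) := by positivity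
          linarith [hrw, h6]
        · have hnotdone := hdone
          rw [doneCol] at hnotdone
          push_neg at hnotdone
          obtain ⟨hc2, hK2⟩ := hnotdone
          have hc2' : 2 ≤ (σ.1 j).card := by omega
          have hK2' : 2 * σ.2 j ≤ n := by omega
          have hInvj : n ≤ (σ.1 j).card + σ.2 j := (hInv j).resolve_left hdone
          have hn2card : n ≤ 2 * (σ.1 j).card := by omega
          set K : ℝ := ((σ.2 j : ℕ) : ℝ) with hK
          have hKnn : (0:ℝ) ≤ (2 / n) * K := by rw [hK]; positivity
          have htm : (if doneCol n σm j then (1 : ℝ) else (2 / n) * σm.2 j) ≤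
              (2 / n) * K + 4 / n := by
            by_cases hdm : doneCol n σm j
            · rw [if_pos hdm]
              have hKlb : (n:ℝ) ≤ 2 * K + 4 := by
                rw [doneCol, hσm1j, hσm2j] at hdm
                have hsd : (σ.1 j).card ≤ (σ.1 j \ {i}).card + 1 := by
                  rw [Finset.sdiff_singleton_eq_erase]
                  by_cases hi : i ∈ σ.1 j
                  · rw [Finset.card_erase_of_mem hi]; omega
                  · rw [Finset.erase_eq_of_notMem hi]; omega
                have hnat : n ≤ 2 * σ.2 j + 4 := by
                  rcases hdm with hd | hd <;> omega
                rw [hK]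
                exact_mod_cast hnat
              calc (1:ℝ) = (n:ℝ) / n := (div_self hn0.ne').symm
                _ ≤ (2 * K + 4) / n := (div_le_div_iff_of_pos_right hn0).mpr hKlb
                _ = (2 / n) * K + 4 / n := by ring
            · rw [if_neg hdm, hσm2j]
              have hcst : ((σ.2 j + 1 : ℕ) : ℝ) = K + 1 := by rw [hK]; push_cast; ring
              rw [hcst]
              have h24 : (2:ℝ) / n ≤ 4 / n := (div_le_div_iff_of_pos_right hn0).mpr (by norm_num)
              linarith [h24]
          have hNLh : ((Fintype.piFinset σh.1).card : ℝ) ≤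
              (2 / n) * ((Fintype.piFinset σ.1).card : ℝ) := by
            have hnat : n * (Fintype.piFinset σh.1).card ≤
                2 * (Fintype.piFinset σ.1).card := by
              rw [hσh, hcards, hLcard]
              calc n * ((σ.1 j ∩ {i}).card * ∏ j' ∈ Finset.univ.erase j, (σ.1 j').card)
                  ≤ n * (1 * ∏ j' ∈ Finset.univ.erase j, (σ.1 j').card) := by
                    apply Nat.mul_le_mul_left
                    apply Nat.mul_le_mul_right
                    calc (σ.1 j ∩ {i}).card ≤ ({i} : Finset (Fin n)).card :=
                          Finset.card_le_card Finset.inter_subset_right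
                      _ = 1 := Finset.card_singleton _
                _ = n * ∏ j' ∈ Finset.univ.erase j, (σ.1 j').card := by ring
                _ ≤ (2 * (σ.1 j).card) * ∏ j' ∈ Finset.univ.erase j, (σ.1 j').card :=
                    Nat.mul_le_mul_right _ hn2card
                _ = 2 * ((σ.1 j).card * ∏ j' ∈ Finset.univ.erase j, (σ.1 j').card) := by ring
            have hcast : (n:ℝ) * ((Fintype.piFinset σh.1).card : ℝ) ≤
                2 * ((Fintype.piFinset σ.1).card : ℝ) := by exact_mod_cast hnat
            rw [div_mul_eq_mul_div, le_div_iff₀ hn0]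
            linarith [hcast]
          have hLmL : ((Fintype.piFinset σm.1).card : ℝ) ≤
              ((Fintype.piFinset σ.1).card : ℝ) := by
            have hnat : (Fintype.piFinset σm.1).card ≤ (Fintype.piFinset σ.1).card := by
              rw [hσm, hcards, hLcard]
              exact Nat.mul_le_mul_right _ (Finset.card_le_card Finset.sdiff_subset)
            exact_mod_cast hnat
          have hLm_nn : (0:ℝ) ≤ ((Fintype.piFinset σm.1).card : ℝ) := Nat.cast_nonneg _
          rw [hφh, if_pos hdoneh, hφm, hφ, if_neg hdone]
          have hstep1 : ((Fintype.piFinset σm.1).card : ℝ) *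
              ((if doneCol n σm j then (1 : ℝ) else (2 / n) * σm.2 j) + rest) ≤
              ((Fintype.piFinset σm.1).card : ℝ) * ((2 / n) * K + 4 / n + rest) := by
            apply mul_le_mul_of_nonneg_left _ hLm_nn
            linarith [htm]
          have hA : ((Fintype.piFinset σm.1).card : ℝ) * ((2 / n) * K) ≤
              ((Fintype.piFinset σ.1).card : ℝ) * ((2 / n) * K) :=
            mul_le_mul_of_nonneg_right hLmL hKnn
          have hB : ((Fintype.piFinset σm.1).card : ℝ) * (4 / n) ≤
              ((Fintype.piFinset σ.1).card : ℝ) * (4 / n) :=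
            mul_le_mul_of_nonneg_right hLmL (by positivity)
          have hrestmul : ((Fintype.piFinset σh.1).card : ℝ) * rest +
              ((Fintype.piFinset σm.1).card : ℝ) * rest =
              ((Fintype.piFinset σ.1).card : ℝ) * rest := by
            rw [← add_mul, hcardsum]
          have h246 : (6 / (n:ℝ)) * ((Fintype.piFinset σ.1).card : ℝ) =
              (2 / n) * ((Fintype.piFinset σ.1).card : ℝ) +
              (4 / n) * ((Fintype.piFinset σ.1).card : ℝ) := by ring
          have hKval : (2 / (n:ℝ)) * (σ.2 j : ℝ) = (2 / n) * K := by rw [hK]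
          nlinarith [hstep1, hA, hB, hNLh, hrestmul, h246, hKval]
      -- assemble
      have hihh := ih (PSym.zero n m (Fin n × Fin m)) σh hInvh
      have hihm := ih (PSym.one n m (Fin n × Fin m)) σm hInvm
      have hq : ∀ ℓ : Fin m → Fin n,
          DTree.queryList (xhard n m (Fin n × Fin m) ℓ) (DTree.node (i, j) ch) =
          (i, j) :: DTree.queryList (xhard n m (Fin n × Fin m) ℓ)
            (ch (xhard n m (Fin n × Fin m) ℓ (i, j))) := fun ℓ => rfl
      have hcu : ((Fintype.piFinset σ.1).card : ℝ) =
          ((Fintype.piFinset σh.1).card : ℝ) + ((Fintype.piFinset σm.1).card : ℝ) := by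
        rw [hunion, Finset.card_union_of_disjoint hdisj]
        push_cast
        ring
      have e1 : ∑ ℓ ∈ Fintype.piFinset σ.1,
          phi n (finS ℓ (DTree.queryList (xhard n m (Fin n × Fin m) ℓ)
            (DTree.node (i, j) ch)) σ) =
          (∑ ℓ ∈ Fintype.piFinset σh.1, phi n (finS ℓ
            (DTree.queryList (xhard n m (Fin n × Fin m) ℓ)
              (ch (PSym.zero n m (Fin n × Fin m)))) σh)) +
          (∑ ℓ ∈ Fintype.piFinset σm.1, phi n (finS ℓ
            (DTree.queryList (xhard n m (Fin n × Fin m) ℓ)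
              (ch (PSym.one n m (Fin n × Fin m)))) σm)) := by
        rw [hunion, Finset.sum_union hdisj]
        congr 1
        · refine Finset.sum_congr rfl fun ℓ hℓ => ?_
          rw [hq ℓ, finS_cons, hstph ℓ (hLh ℓ hℓ), hxh ℓ (hLh ℓ hℓ)]
        · refine Finset.sum_congr rfl fun ℓ hℓ => ?_
          rw [hq ℓ, finS_cons, hstpm ℓ (hLm ℓ hℓ), hxm ℓ (hLm ℓ hℓ)]
      have g1 : ∑ ℓ ∈ Fintype.piFinset σh.1,
          ((DTree.queryList (xhard n m (Fin n × Fin m) ℓ) (DTree.node (i, j) ch)).length : ℝ) =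
          ((Fintype.piFinset σh.1).card : ℝ) + ∑ ℓ ∈ Fintype.piFinset σh.1,
            ((DTree.queryList (xhard n m (Fin n × Fin m) ℓ)
              (ch (PSym.zero n m (Fin n × Fin m)))).length : ℝ) := by
        have hterm : ∀ ℓ ∈ Fintype.piFinset σh.1,
            ((DTree.queryList (xhard n m (Fin n × Fin m) ℓ)
              (DTree.node (i, j) ch)).length : ℝ) =
            1 + ((DTree.queryList (xhard n m (Fin n × Fin m) ℓ)
              (ch (PSym.zero n m (Fin n × Fin m)))).length : ℝ) := by
          intro ℓ hℓ
          rw [hq ℓ, hxh ℓ (hLh ℓ hℓ), List.length_cons]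
          push_cast
          ring
        rw [Finset.sum_congr rfl hterm, Finset.sum_add_distrib, Finset.sum_const,
          nsmul_eq_mul, mul_one]
      have g2 : ∑ ℓ ∈ Fintype.piFinset σm.1,
          ((DTree.queryList (xhard n m (Fin n × Fin m) ℓ) (DTree.node (i, j) ch)).length : ℝ) =
          ((Fintype.piFinset σm.1).card : ℝ) + ∑ ℓ ∈ Fintype.piFinset σm.1,
            ((DTree.queryList (xhard n m (Fin n × Fin m) ℓ)
              (ch (PSym.one n m (Fin n × Fin m)))).length : ℝ) := by
        have hterm : ∀ ℓ ∈ Fintype.piFinset σm.1,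
            ((DTree.queryList (xhard n m (Fin n × Fin m) ℓ)
              (DTree.node (i, j) ch)).length : ℝ) =
            1 + ((DTree.queryList (xhard n m (Fin n × Fin m) ℓ)
              (ch (PSym.one n m (Fin n × Fin m)))).length : ℝ) := by
          intro ℓ hℓ
          rw [hq ℓ, hxm ℓ (hLm ℓ hℓ), List.length_cons]
          push_cast
          ring
        rw [Finset.sum_congr rfl hterm, Finset.sum_add_distrib, Finset.sum_const,
          nsmul_eq_mul, mul_one]
      have e2 : ∑ ℓ ∈ Fintype.piFinset σ.1,
          ((DTree.queryList (xhard n m (Fin n × Fin m) ℓ)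
            (DTree.node (i, j) ch)).length : ℝ) =
          (((Fintype.piFinset σh.1).card : ℝ) + ((Fintype.piFinset σm.1).card : ℝ)) +
          ((∑ ℓ ∈ Fintype.piFinset σh.1,
            ((DTree.queryList (xhard n m (Fin n × Fin m) ℓ)
              (ch (PSym.zero n m (Fin n × Fin m)))).length : ℝ)) +
          (∑ ℓ ∈ Fintype.piFinset σm.1,
            ((DTree.queryList (xhard n m (Fin n × Fin m) ℓ)
              (ch (PSym.one n m (Fin n × Fin m)))).length : ℝ))) := by
        rw [hunion, Finset.sum_union hdisj, g1, g2]
        ring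
      rw [e1, e2]
      have hc6 : (6 / (n:ℝ)) * ((Fintype.piFinset σ.1).card : ℝ) =
          (6 / n) * ((Fintype.piFinset σh.1).card : ℝ) +
          (6 / n) * ((Fintype.piFinset σm.1).card : ℝ) := by
        rw [hcu]; ring
      linarith [hihh, hihm, hkey, hc6]
end S4
namespace S4
open scoped Classical

theorem countP_toFinset_le {n m : ℕ} (l : List (Fin n × Fin m)) (j : Fin m) :
    ((l.toFinset.filter fun c => c.2 = j).card : ℕ) ≤
      l.countP (fun c => decide (c.2 = j)) := by
  induction l with
  | nil => simp
  | cons c l ih =>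
      rw [List.countP_cons, List.toFinset_cons]
      by_cases hc : c.2 = j
      · rw [if_pos (by simpa using hc)]
        calc ((insert c l.toFinset).filter fun c => c.2 = j).card
            ≤ (insert c (l.toFinset.filter fun c => c.2 = j)).card := by
              apply Finset.card_le_card
              intro d hd
              rw [Finset.mem_filter, Finset.mem_insert] at hd
              rcases hd.1 with h | h
              · exact Finset.mem_insert.mpr (Or.inl h)
              · exact Finset.mem_insert.mpr (Or.inr (Finset.mem_filter.mpr ⟨h, hd.2⟩))
          _ ≤ (l.toFinset.filter fun c => c.2 = j).card + 1 := Finset.card_insert_le _ _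
          _ ≤ _ := by omega
      · rw [if_neg (by simpa using hc)]
        have : (insert c l.toFinset).filter (fun c => c.2 = j) =
            l.toFinset.filter fun c => c.2 = j := by
          rw [Finset.filter_insert, if_neg hc]
        rw [this]
        omega

theorem tree_bound {n m : ℕ} (hn : 16 ≤ n) (hm : 16 ≤ m) (hme : Even m)
    (T : DTree (Fin n × Fin m) (PSym n m (Fin n × Fin m)))
    (hT : T.Computes (gFun n m)) :
    n * m * Fintype.card (Fin m → Fin n) ≤
      12 * ∑ ℓ : Fin m → Fin n, T.cost (xhard n m (Fin n × Fin m) ℓ) := by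
  have hn0 : (0:ℝ) < n := by exact_mod_cast (by omega : 0 < n)
  set σ0 : Sig n m := (fun _ => Finset.univ, fun _ => 0) with hσ0
  have hInv0 : ∀ j, doneCol n σ0 j ∨ n ≤ (σ0.1 j).card + σ0.2 j := by
    intro j
    right
    rw [hσ0]
    simp
  have hpi : Fintype.piFinset σ0.1 = Finset.univ := by
    ext ℓ
    simp [Fintype.mem_piFinset, hσ0]
  have hphi0 : phi n σ0 = 0 := by
    rw [phi]
    apply Finset.sum_eq_zero
    intro j _
    have hnd : ¬ doneCol n σ0 j := by
      rw [doneCol, hσ0]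
      simp only [Finset.card_univ, Fintype.card_fin]
      omega
    rw [if_neg hnd, hσ0]
    simp
  have hmain := main_ineq (by omega) T σ0 hInv0
  rw [hpi, hphi0, mul_zero, zero_add] at hmain
  have hlow : ∀ ℓ : Fin m → Fin n, ((m / 2 : ℕ) : ℝ) ≤
      phi n (finS ℓ (DTree.queryList (xhard n m (Fin n × Fin m) ℓ) T) σ0) := by
    intro ℓ
    set l := DTree.queryList (xhard n m (Fin n × Fin m) ℓ) T with hl
    set Q := l.toFinset with hQl
    have hcomp : m / 2 ≤ (Finset.univ.filter fun j => compromisedCol n m ℓ Q j).card := by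
      apply claimA hn hm hme ℓ Q
      intro y hy
      have hagree : ∀ c ∈ l, y c = xhard n m (Fin n × Fin m) ℓ c := fun c hc =>
        hy c (by rw [hQl]; exact List.mem_toFinset.mpr hc)
      calc gFun n m y = T.eval y := (hT y).symm
        _ = T.eval (xhard n m (Fin n × Fin m) ℓ) :=
            eval_eq_of_agree T (xhard n m (Fin n × Fin m) ℓ) y hagree
        _ = gFun n m (xhard n m (Fin n × Fin m) ℓ) := hT _
        _ = false := gFun_xhard_false n m ℓ
    have hsub : (Finset.univ.filter fun j => compromisedCol n m ℓ Q j) ⊆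
        (Finset.univ.filter fun j => doneCol n (finS ℓ l σ0) j) := by
      intro j hj
      rw [Finset.mem_filter] at hj ⊢
      refine ⟨Finset.mem_univ _, ?_⟩
      rcases hj.2 with hq | hq
      · exact Or.inl (finS_hit ℓ l j σ0 (by rw [hQl] at hq; exact List.mem_toFinset.mp hq))
      · right
        have h1 : ((Q.filter fun c => c.2 = j).card : ℕ) ≤
            l.countP (fun c => decide (c.2 = j)) := by
          rw [hQl]; exact countP_toFinset_le l j
        have h2 := finS_cnt ℓ l σ0 j
        have h20 : σ0.2 j = 0 := rfl
        omega
    have hcard := Finset.card_le_card hsub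
    calc ((m / 2 : ℕ) : ℝ) ≤
        ((Finset.univ.filter fun j => doneCol n (finS ℓ l σ0) j).card : ℝ) := by
          exact_mod_cast le_trans hcomp hcard
      _ ≤ phi n (finS ℓ l σ0) := phi_ge_done n (by omega) _
  have hsum : ((m / 2 : ℕ) : ℝ) * (Fintype.card (Fin m → Fin n) : ℝ) ≤
      (6 / n) * ∑ ℓ : Fin m → Fin n,
        ((DTree.queryList (xhard n m (Fin n × Fin m) ℓ) T).length : ℝ) := by
    calc ((m / 2 : ℕ) : ℝ) * (Fintype.card (Fin m → Fin n) : ℝ)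
        = ∑ _ℓ : Fin m → Fin n, ((m / 2 : ℕ) : ℝ) := by
          rw [Finset.sum_const, Finset.card_univ, nsmul_eq_mul, mul_comm]
      _ ≤ ∑ ℓ : Fin m → Fin n,
          phi n (finS ℓ (DTree.queryList (xhard n m (Fin n × Fin m) ℓ) T) σ0) :=
          Finset.sum_le_sum fun ℓ _ => hlow ℓ
      _ ≤ _ := hmain
  have hfin : (n : ℝ) * (((m / 2 : ℕ) : ℝ) * (Fintype.card (Fin m → Fin n) : ℝ)) ≤
      6 * ∑ ℓ : Fin m → Fin n,
        ((DTree.queryList (xhard n m (Fin n × Fin m) ℓ) T).length : ℝ) := by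
    have h6 : (6 / (n:ℝ)) * ∑ ℓ : Fin m → Fin n,
        ((DTree.queryList (xhard n m (Fin n × Fin m) ℓ) T).length : ℝ) =
        (6 * ∑ ℓ : Fin m → Fin n,
          ((DTree.queryList (xhard n m (Fin n × Fin m) ℓ) T).length : ℝ)) / n := by ring
    rw [h6] at hsum
    rw [mul_comm]
    exact (le_div_iff₀ hn0).mp hsum
  have hnat : n * (m / 2) * Fintype.card (Fin m → Fin n) ≤
      6 * ∑ ℓ : Fin m → Fin n, T.cost (xhard n m (Fin n × Fin m) ℓ) := by
    have hcost : ∀ ℓ : Fin m → Fin n, T.cost (xhard n m (Fin n × Fin m) ℓ) =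
        (DTree.queryList (xhard n m (Fin n × Fin m) ℓ) T).length := fun _ => rfl
    have : (↑(n * (m / 2) * Fintype.card (Fin m → Fin n)) : ℝ) ≤
        ((6 * ∑ ℓ : Fin m → Fin n, T.cost (xhard n m (Fin n × Fin m) ℓ) : ℕ) : ℝ) := by
      push_cast
      calc ((n:ℝ) * ((m/2 : ℕ):ℝ)) * (Fintype.card (Fin m → Fin n) : ℝ)
          = (n : ℝ) * (((m / 2 : ℕ) : ℝ) * (Fintype.card (Fin m → Fin n) : ℝ)) := by ring
        _ ≤ 6 * ∑ ℓ : Fin m → Fin n,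
            ((DTree.queryList (xhard n m (Fin n × Fin m) ℓ) T).length : ℝ) := hfin
        _ = 6 * ∑ ℓ : Fin m → Fin n, (T.cost (xhard n m (Fin n × Fin m) ℓ) : ℝ) := by
            apply congrArg
            exact Finset.sum_congr rfl fun ℓ _ => by rw [hcost ℓ]
    exact_mod_cast this
  obtain ⟨m2, hm2⟩ := hme
  have hm2' : m / 2 = m2 := by omega
  calc n * m * Fintype.card (Fin m → Fin n)
      = 2 * (n * (m / 2) * Fintype.card (Fin m → Fin n)) := by
        rw [hm2']
        rw [show m = m2 + m2 from hm2]
        ring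
    _ ≤ 2 * (6 * ∑ ℓ : Fin m → Fin n, T.cost (xhard n m (Fin n × Fin m) ℓ)) :=
        Nat.mul_le_mul_left 2 hnat
    _ = 12 * ∑ ℓ : Fin m → Fin n, T.cost (xhard n m (Fin n × Fin m) ℓ) := by ring

end S4
/-- `R0(g_{n,m}) = Ω(n·m)`. -/
theorem statement4 :
    ∃ c : ℝ, 0 < c ∧ ∃ N : ℕ, ∀ n m : ℕ, N ≤ n → N ≤ m → Even m →
      ENNReal.ofReal (c * n * m) ≤ R0query (gFun n m) := by
  refine ⟨1/12, by norm_num, 16, ?_⟩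
  intro n m hn hm hme
  rw [R0query, iInf_subtype']
  rw [le_iInf_iff]
  rintro ⟨μ, hμ⟩
  set xh : (Fin m → Fin n) → (Fin n × Fin m → PSym n m (Fin n × Fin m)) :=
    fun ℓ => xhard n m (Fin n × Fin m) ℓ with hxh
  set NN := Fintype.card (Fin m → Fin n) with hNN
  have hNpos : 0 < NN := by
    rw [hNN]
    exact Fintype.card_pos_iff.mpr ⟨fun _ => ⟨0, by omega⟩⟩
  set B := ⨆ x : Fin n × Fin m → PSym n m (Fin n × Fin m), expCost μ x with hB
  have h2 : ∑ ℓ : Fin m → Fin n, expCost μ (xh ℓ) ≤ (NN : ℝ≥0∞) * B := by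
    calc ∑ ℓ : Fin m → Fin n, expCost μ (xh ℓ) ≤ ∑ _ℓ : Fin m → Fin n, B :=
          Finset.sum_le_sum fun ℓ _ => le_iSup _ (xh ℓ)
      _ = (NN : ℝ≥0∞) * B := by
          rw [Finset.sum_const, Finset.card_univ, nsmul_eq_mul, hNN]
  have hswap : ∑ ℓ : Fin m → Fin n, expCost μ (xh ℓ) =
      ∑' T : DTree (Fin n × Fin m) (PSym n m (Fin n × Fin m)),
        μ T * ∑ ℓ : Fin m → Fin n, (T.cost (xh ℓ) : ℝ≥0∞) := by
    calc ∑ ℓ : Fin m → Fin n, expCost μ (xh ℓ)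
        = ∑ ℓ : Fin m → Fin n, ∑' T : DTree (Fin n × Fin m) (PSym n m (Fin n × Fin m)),
            μ T * (T.cost (xh ℓ) : ℝ≥0∞) := rfl
      _ = ∑' T : DTree (Fin n × Fin m) (PSym n m (Fin n × Fin m)),
            ∑ ℓ : Fin m → Fin n, μ T * (T.cost (xh ℓ) : ℝ≥0∞) :=
          (Summable.tsum_finsetSum fun _ _ => ENNReal.summable).symm
      _ = _ := by
          refine tsum_congr fun T => ?_
          rw [Finset.mul_sum]
  have h4 : ∀ T : DTree (Fin n × Fin m) (PSym n m (Fin n × Fin m)),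
      μ T * ((n * m * NN : ℕ) : ℝ≥0∞) ≤
      μ T * (12 * ∑ ℓ : Fin m → Fin n, (T.cost (xh ℓ) : ℝ≥0∞)) := by
    intro T
    by_cases h0 : μ T = 0
    · simp [h0]
    · have hT := hμ T ((PMF.mem_support_iff μ T).mpr h0)
      have hnat := S4.tree_bound hn hm hme T hT
      apply mul_le_mul_right
      calc ((n * m * NN : ℕ) : ℝ≥0∞) ≤
          ((12 * ∑ ℓ : Fin m → Fin n, T.cost (xh ℓ) : ℕ) : ℝ≥0∞) :=
            Nat.cast_le.mpr hnat
        _ = 12 * ∑ ℓ : Fin m → Fin n, (T.cost (xh ℓ) : ℝ≥0∞) := by push_cast; ring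
  have h5 : ((n * m * NN : ℕ) : ℝ≥0∞) ≤ 12 * ((NN : ℝ≥0∞) * B) := by
    calc ((n * m * NN : ℕ) : ℝ≥0∞)
        = ∑' T : DTree (Fin n × Fin m) (PSym n m (Fin n × Fin m)),
            μ T * ((n * m * NN : ℕ) : ℝ≥0∞) := by
          rw [ENNReal.tsum_mul_right, PMF.tsum_coe, one_mul]
      _ ≤ ∑' T : DTree (Fin n × Fin m) (PSym n m (Fin n × Fin m)),
            μ T * (12 * ∑ ℓ : Fin m → Fin n, (T.cost (xh ℓ) : ℝ≥0∞)) :=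
          ENNReal.tsum_le_tsum h4
      _ = 12 * ∑' T : DTree (Fin n × Fin m) (PSym n m (Fin n × Fin m)),
            μ T * ∑ ℓ : Fin m → Fin n, (T.cost (xh ℓ) : ℝ≥0∞) := by
          rw [← ENNReal.tsum_mul_left]
          refine tsum_congr fun T => ?_
          ring
      _ = 12 * ∑ ℓ : Fin m → Fin n, expCost μ (xh ℓ) := by rw [hswap]
      _ ≤ 12 * ((NN : ℝ≥0∞) * B) := mul_le_mul_right h2 12
  have hcancel : ((n : ℝ≥0∞) * m) ≤ 12 * B := by
    have hN0 : (NN : ℝ≥0∞) ≠ 0 := by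
      simp only [ne_eq, Nat.cast_eq_zero]
      omega
    have hNt : (NN : ℝ≥0∞) ≠ ⊤ := ENNReal.natCast_ne_top NN
    rw [← ENNReal.mul_le_mul_iff_left hN0 hNt]
    calc (n : ℝ≥0∞) * m * NN = ((n * m * NN : ℕ) : ℝ≥0∞) := by push_cast; ring
      _ ≤ 12 * ((NN : ℝ≥0∞) * B) := h5
      _ = 12 * B * NN := by ring
  have hgoal : ENNReal.ofReal (1/12 * n * m) ≤ B := by
    have hstep : ENNReal.ofReal (1/12 * n * m) ≤ ((n : ℝ≥0∞) * m) / 12 := by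
      have heq : (1/12 : ℝ) * n * m = ((n * m : ℕ) : ℝ) / 12 := by push_cast; ring
      rw [heq, ENNReal.ofReal_div_of_pos (by norm_num), ENNReal.ofReal_natCast]
      have h12 : ENNReal.ofReal 12 = (12 : ℝ≥0∞) := by
        rw [ENNReal.ofReal_ofNat]
      rw [h12]
      apply le_of_eq
      push_cast
      ring
    refine hstep.trans ?_
    rw [ENNReal.div_le_iff_le_mul (Or.inl (by norm_num)) (Or.inl (by norm_num))]
    calc (n : ℝ≥0∞) * m ≤ 12 * B := hcancel
      _ = B * 12 := by ring
  exact hgoal
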